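/- On the cycle ℤ/nℤ (n ≥ 3), the noisy voter model with parameter δ > 0 is reversible with respect to the Ising Gibbs measure at inverse temperature β = (1/4)·log(1 + 1/δ): the probability measure μ on {0,1}^{ℤ/nℤ} defined by μ(η) = Z⁻¹·exp(β·Σ_{i ∈ ℤ/nℤ} σ_η(i)·σ_η(i+1)), where σ_η(i) = 2η(i) − 1 and Z is the normalizing constant, satisfies the detailed balance condition μ(η)·Q(η, η^x) = μ(η^x)·Q(η^x, η) for every configuration η and every site x. -/

import Mathlib

open Finset

/-- Flip rate of the noisy voter model with noise `δ` at vertex `x` in configuration `η`. -/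
noncomputable def nvRate {V : Type*} [Fintype V] (G : SimpleGraph V) [DecidableRel G.Adj]
    (δ : ℝ) (x : V) (η : V → Bool) : ℝ :=
  (1 / (2 * δ + 1)) *
    ((1 / (G.degree x : ℝ)) * ((Finset.univ.filter fun y => G.Adj x y ∧ η y ≠ η x).card : ℝ) + δ)

/-- The rate matrix of the noisy voter model: single-spin flips occur at rate `nvRate`,
transitions changing two or more spins have rate `0`, and diagonal entries make rows sum to `0`. -/
noncomputable def nvQ {V : Type*} [Fintype V] [DecidableEq V] (G : SimpleGraph V)
    [DecidableRel G.Adj] (δ : ℝ) : Matrix (V → Bool) (V → Bool) ℝ := fun η η' =>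
  if η = η' then -∑ x, nvRate G δ x η
  else if (Finset.univ.filter fun v => η v ≠ η' v).card = 1 then
    ∑ x ∈ Finset.univ.filter (fun v => η v ≠ η' v), nvRate G δ x η
  else 0

/-- The cycle graph on `ℤ/nℤ`: `i ~ j` iff `j = i ± 1 (mod n)` and `i ≠ j`. -/
def cycleGraph (n : ℕ) : SimpleGraph (ZMod n) where
  Adj i j := i ≠ j ∧ (j = i + 1 ∨ i = j + 1)
  symm := ⟨by rintro i j ⟨h1, h2⟩; exact ⟨h1.symm, h2.symm⟩⟩
  loopless := ⟨by rintro i ⟨h, _⟩; exact h rfl⟩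

instance (n : ℕ) : DecidableRel (cycleGraph n).Adj := fun i j =>
  inferInstanceAs (Decidable (i ≠ j ∧ (j = i + 1 ∨ i = j + 1)))

/-- The `±1`-spin associated to a `{0,1}`-configuration: `σ_η(i) = 2η(i) − 1`. -/
def spin {n : ℕ} (η : ZMod n → Bool) (i : ZMod n) : ℝ :=
  2 * (if η i = true then 1 else 0) - 1

/-- The Ising Gibbs measure at inverse temperature `β` on the cycle `ℤ/nℤ`:
`μ(η) = Z⁻¹·exp(β·Σ_i σ_η(i)·σ_η(i+1))`. -/
noncomputable def isingGibbs (n : ℕ) [NeZero n] (β : ℝ) (η : ZMod n → Bool) : ℝ :=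
  Real.exp (β * ∑ i : ZMod n, spin η i * spin η (i + 1)) /
    ∑ η' : ZMod n → Bool, Real.exp (β * ∑ i : ZMod n, spin η' i * spin η' (i + 1))

/-- On the cycle `ℤ/nℤ` (`n ≥ 3`), the noisy voter model with parameter `δ > 0` is reversible
with respect to the Ising Gibbs measure at inverse temperature `β = (1/4)·log(1 + 1/δ)`:
detailed balance `μ(η)·Q(η,η^x) = μ(η^x)·Q(η^x,η)` holds at every configuration `η` and
every site `x`. -/
theorem noisy_voter_cycle_reversible_ising
    (n : ℕ) [NeZero n] (hn : 3 ≤ n) (δ : ℝ) (hδ : 0 < δ)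
    (η : ZMod n → Bool) (x : ZMod n) :
    isingGibbs n ((1 / 4) * Real.log (1 + 1 / δ)) η *
        nvQ (cycleGraph n) δ η (Function.update η x (!η x)) =
      isingGibbs n ((1 / 4) * Real.log (1 + 1 / δ)) (Function.update η x (!η x)) *
        nvQ (cycleGraph n) δ (Function.update η x (!η x)) η := by
  haveI : Fact (1 < n) := ⟨by omega⟩
  have h1 : (1 : ZMod n) ≠ 0 := one_ne_zero
  have h2 : (2 : ZMod n) ≠ 0 := by
    intro h
    have h' : ((2:ℕ) : ZMod n) = 0 := by exact_mod_cast h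
    rw [ZMod.natCast_eq_zero_iff] at h'
    have := Nat.le_of_dvd (by norm_num) h'
    omega
  have hx1 : x + 1 ≠ x := by intro h; exact h1 (by linear_combination h)
  have hx2 : x - 1 ≠ x := by intro h; exact h1 (by linear_combination -h)
  have hx3 : x + 1 ≠ x - 1 := by intro h; exact h2 (by linear_combination h)
  set β := (1/4) * Real.log (1 + 1/δ) with hβ
  set η' := Function.update η x (!η x) with hη'
  have hηx : η' x = !η x := Function.update_self x (!η x) η
  have hηne : ∀ i : ZMod n, i ≠ x → η' i = η i := fun i hi => Function.update_of_ne hi _ _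
  have hne : η ≠ η' := by
    intro h
    have := congrFun h x
    rw [hηx] at this
    simp at this
  -- neighbor finset
  have hnbr : (cycleGraph n).neighborFinset x = {x + 1, x - 1} := by
    ext y
    rw [SimpleGraph.mem_neighborFinset]
    simp only [cycleGraph, mem_insert, mem_singleton]
    constructor
    · rintro ⟨hne', h | h⟩
      · exact Or.inl h
      · right; rw [h]; ring
    · rintro (h | h)
      · exact ⟨by rw [h]; exact (Ne.symm hx1), Or.inl h⟩
      · exact ⟨by rw [h]; exact (Ne.symm hx2), Or.inr (by rw [h]; ring)⟩
  have hdeg : (cycleGraph n).degree x = 2 := by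
    rw [SimpleGraph.degree, hnbr, card_insert_of_notMem (by simp [hx3]), card_singleton]
  -- filters for nvQ
  have hf1 : (univ.filter fun v => η v ≠ η' v) = {x} := by
    ext v
    by_cases hv : v = x
    · subst hv; simp [hηx]
    · simp [hv, hηne v hv]
  have hf2 : (univ.filter fun v => η' v ≠ η v) = {x} := by
    ext v
    by_cases hv : v = x
    · subst hv; simp [hηx]
    · simp [hv, hηne v hv]
  have hQ1 : nvQ (cycleGraph n) δ η η' = nvRate (cycleGraph n) δ x η := by
    simp only [nvQ]
    rw [if_neg hne, hf1]
    simp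
  have hQ2 : nvQ (cycleGraph n) δ η' η = nvRate (cycleGraph n) δ x η' := by
    simp only [nvQ]
    rw [if_neg (Ne.symm hne), hf2]
    simp
  -- cards
  have hfc1 : (univ.filter fun y => (cycleGraph n).Adj x y ∧ η y ≠ η x)
      = ({x + 1, x - 1} : Finset (ZMod n)).filter (fun y => η y ≠ η x) := by
    ext y
    simp only [mem_filter, mem_univ, true_and]
    rw [← SimpleGraph.mem_neighborFinset, hnbr]
  have hc1 : (univ.filter fun y => (cycleGraph n).Adj x y ∧ η y ≠ η x).card
      = (if η (x+1) = η x then 0 else 1) + (if η (x-1) = η x then 0 else 1) := by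
    rw [hfc1, filter_insert, filter_singleton]
    split_ifs <;> simp_all [card_insert_of_notMem, hx3]
  have hfc2 : (univ.filter fun y => (cycleGraph n).Adj x y ∧ η' y ≠ η' x)
      = ({x + 1, x - 1} : Finset (ZMod n)).filter (fun y => η' y ≠ η' x) := by
    ext y
    simp only [mem_filter, mem_univ, true_and]
    rw [← SimpleGraph.mem_neighborFinset, hnbr]
  have hc2 : (univ.filter fun y => (cycleGraph n).Adj x y ∧ η' y ≠ η' x).card
      = (if η (x+1) = η x then 1 else 0) + (if η (x-1) = η x then 1 else 0) := by
    rw [hfc2, filter_insert, filter_singleton, hηx, hηne _ hx1, hηne _ hx2]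
    split_ifs with ha hb hb <;>
      simp_all [card_insert_of_notMem, hx3]
  -- energy difference
  have hΔ : (∑ i : ZMod n, spin η i * spin η (i + 1)) -
      (∑ i : ZMod n, spin η' i * spin η' (i + 1))
      = 2 * spin η x * (spin η (x - 1) + spin η (x + 1)) := by
    have hsnx : ∀ i : ZMod n, i ≠ x → spin η' i = spin η i := by
      intro i hi; simp [spin, hηne i hi]
    have hsxx : spin η' x = -spin η x := by
      simp only [spin, hηx]; cases η x <;> norm_num
    rw [← Finset.sum_sub_distrib]
    rw [← Finset.sum_subset (Finset.subset_univ ({x - 1, x} : Finset (ZMod n)))]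
    · rw [Finset.sum_pair hx2]
      have e1 : x - 1 + 1 = x := by ring
      rw [e1, hsxx, hsnx _ hx2, hsnx _ hx1]
      ring
    · intro i _ hi
      simp only [mem_insert, mem_singleton] at hi
      push_neg at hi
      have hi2 : i + 1 ≠ x := by intro h; exact hi.1 (by linear_combination h)
      rw [hsnx _ hi.2, hsnx _ hi2]; ring
  rw [hQ1, hQ2]
  set S := ∑ i : ZMod n, spin η i * spin η (i + 1) with hS
  set S' := ∑ i : ZMod n, spin η' i * spin η' (i + 1) with hS'
  set Z := ∑ η'' : ZMod n → Bool, Real.exp (β * ∑ i : ZMod n, spin η'' i * spin η'' (i + 1)) with hZdef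
  have hZ : 0 < Z := Finset.sum_pos (fun _ _ => Real.exp_pos _) univ_nonempty
  have hSS : S = S' + 2 * spin η x * (spin η (x - 1) + spin η (x + 1)) := by
    linarith [hΔ]
  have ht : (0:ℝ) < 1 + 1/δ := by positivity
  have hR1 : nvRate (cycleGraph n) δ x η = (1/(2*δ+1)) *
      (((if η (x+1) = η x then (0:ℝ) else 1) + (if η (x-1) = η x then (0:ℝ) else 1))/2 + δ) := by
    simp only [nvRate, hdeg, hc1]
    push_cast
    ring
  have hR2 : nvRate (cycleGraph n) δ x η' = (1/(2*δ+1)) *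
      (((if η (x+1) = η x then (1:ℝ) else 0) + (if η (x-1) = η x then (1:ℝ) else 0))/2 + δ) := by
    simp only [nvRate, hdeg, hc2]
    push_cast
    ring
  have hprod : ∀ i j : ZMod n, spin η i * spin η j = if η j = η i then (1:ℝ) else -1 := by
    intro i j
    simp only [spin]
    cases hi : η i <;> cases hj : η j <;> norm_num
  have eΔ : 2 * spin η x * (spin η (x - 1) + spin η (x + 1)) =
      2 * ((if η (x-1) = η x then (1:ℝ) else -1) + (if η (x+1) = η x then (1:ℝ) else -1)) := by
    rw [← hprod x (x-1), ← hprod x (x+1)]; ring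
  have key : Real.exp (β * S) *
      (((if η (x+1) = η x then (0:ℝ) else 1) + (if η (x-1) = η x then (0:ℝ) else 1))/2 + δ)
      = Real.exp (β * S') *
      (((if η (x+1) = η x then (1:ℝ) else 0) + (if η (x-1) = η x then (1:ℝ) else 0))/2 + δ) := by
    rw [hSS, mul_add β, Real.exp_add, eΔ]
    by_cases hb : η (x+1) = η x <;> by_cases hc : η (x-1) = η x <;>
        simp only [if_pos, if_neg, hb, hc, if_true, if_false]
    · rw [show (2:ℝ) * (1 + 1) = 4 from by norm_num,
        show β * 4 = Real.log (1 + 1/δ) from by rw [hβ]; ring, Real.exp_log ht]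
      field_simp
      ring
    · norm_num
    · norm_num
    · rw [show (2:ℝ) * (-1 + -1) = -4 from by norm_num,
        show β * (-4) = -Real.log (1 + 1/δ) from by rw [hβ]; ring, Real.exp_neg,
        Real.exp_log ht]
      rw [inv_eq_one_div]
      field_simp
      ring
  rw [hR1, hR2]
  simp only [isingGibbs]
  rw [← hZdef, ← hS, ← hS']
  rw [div_mul_eq_mul_div (Real.exp (β * S')) Z, div_mul_eq_mul_div (Real.exp (β * S)) Z,
    div_eq_div_iff hZ.ne' hZ.ne']
  linear_combination (Z / (2*δ+1)) * key
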